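/- Let g, ĝ, g̃ be symmetric 4×4 real matrices, f̂, f̃ antisymmetric 4×4 real matrices, Ĝ = ĝ + f̂, G̃ = g̃ + f̃. Suppose l ∈ ℝ⁴ satisfies lᵀgl = 0 and there is α ∈ ℝ with G̃ᵀl = α·(gl) (i.e., l_cG̃^{cq} = α·l^q, the degenerate characteristic condition of Case 2). Then P(l)·v = 0 for every v ∈ ℝ⁴ with (gl)ᵀv = 0; in particular, if gl ≠ 0 the kernel of the principal symbol P(l) = (lᵀgl)·g − (gl)(gl)ᵀ + (Ĝl)(G̃ᵀl)ᵀ has dimension at least 3. -/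
import Mathlib


open Matrix

lemma vecMulVec_mulVec' (a b v : Fin 4 → ℝ) :
    (Matrix.vecMulVec a b).mulVec v = (b ⬝ᵥ v) • a := by
  ext i
  simp [Matrix.mulVec, Matrix.vecMulVec_apply, dotProduct, Finset.mul_sum, mul_assoc,
    mul_comm, mul_left_comm, Finset.sum_mul]

/-- if `l` is `g`-null (`lᵀgl = 0`) and `G̃ᵀl = α·(gl)` for some
real `α` (the degenerate characteristic condition of Case 2), then every `v`
with `(gl)ᵀv = 0` lies in the kernel of the principal symbol
`P(l) = (lᵀgl)·g − (gl)(gl)ᵀ + (Ĝl)(G̃ᵀl)ᵀ`; in particular, if `gl ≠ 0` this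
kernel has dimension at least 3. Here `Ĝ = ĝ + f̂`, `G̃ = g̃ + f̃`. -/
theorem principalSymbol_degenerate_kernel
    (g ghat gtil fhat ftil : Matrix (Fin 4) (Fin 4) ℝ)
    (hg : gᵀ = g) (hghat : ghatᵀ = ghat) (hgtil : gtilᵀ = gtil)
    (hfhat : fhatᵀ = -fhat) (hftil : ftilᵀ = -ftil) (l : Fin 4 → ℝ)
    (hl : l ⬝ᵥ g.mulVec l = 0)
    (α : ℝ) (hdeg : (gtil + ftil)ᵀ.mulVec l = α • g.mulVec l) :
    (∀ v : Fin 4 → ℝ, g.mulVec l ⬝ᵥ v = 0 →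
      ((l ⬝ᵥ g.mulVec l) • g - Matrix.vecMulVec (g.mulVec l) (g.mulVec l) +
          Matrix.vecMulVec ((ghat + fhat).mulVec l) ((gtil + ftil)ᵀ.mulVec l)).mulVec v = 0) ∧
    (g.mulVec l ≠ 0 →
      3 ≤ Module.finrank ℝ
        (LinearMap.ker
          ((l ⬝ᵥ g.mulVec l) • g - Matrix.vecMulVec (g.mulVec l) (g.mulVec l) +
            Matrix.vecMulVec ((ghat + fhat).mulVec l)
              ((gtil + ftil)ᵀ.mulVec l)).mulVecLin)) := by
  have key : ∀ v : Fin 4 → ℝ, g.mulVec l ⬝ᵥ v = 0 →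
      ((l ⬝ᵥ g.mulVec l) • g - Matrix.vecMulVec (g.mulVec l) (g.mulVec l) +
          Matrix.vecMulVec ((ghat + fhat).mulVec l) ((gtil + ftil)ᵀ.mulVec l)).mulVec v = 0 := by
    intro v hv
    rw [Matrix.add_mulVec, Matrix.sub_mulVec, Matrix.smul_mulVec, hl,
      vecMulVec_mulVec', vecMulVec_mulVec', hdeg, smul_dotProduct, hv]
    simp
  refine ⟨key, fun hne => ?_⟩
  -- the kernel of the functional v ↦ gl ⬝ᵥ v has dimension 3 and lies in the kernel
  set φ : (Fin 4 → ℝ) →ₗ[ℝ] ℝ :=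
    { toFun := fun v => g.mulVec l ⬝ᵥ v
      map_add' := fun x y => dotProduct_add _ _ _
      map_smul' := fun c x => by simp [dotProduct_smul] }
  have hsub : LinearMap.ker φ ≤ LinearMap.ker
      ((l ⬝ᵥ g.mulVec l) • g - Matrix.vecMulVec (g.mulVec l) (g.mulVec l) +
        Matrix.vecMulVec ((ghat + fhat).mulVec l) ((gtil + ftil)ᵀ.mulVec l)).mulVecLin := by
    intro v hv
    exact key v hv
  have hφne : φ ≠ 0 := by
    intro h
    apply hne
    ext i
    have := congrFun (congrArg (fun f => f.toFun) h) (Pi.single i 1)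
    simpa [φ, dotProduct_single] using this
  have hrange : Module.finrank ℝ (LinearMap.range φ) = 1 := by
    have : LinearMap.range φ = ⊤ := by
      obtain ⟨v, hv⟩ := DFunLike.ne_iff.mp hφne
      simp only [LinearMap.zero_apply] at hv
      rw [eq_top_iff]
      intro x _
      exact ⟨(x / φ v) • v, by simp [smul_eq_mul, div_mul_cancel₀ _ hv]⟩
    rw [this]
    simp
  have hker : Module.finrank ℝ (LinearMap.ker φ) = 3 := by
    have h4 := LinearMap.finrank_range_add_finrank_ker φ
    rw [hrange] at h4
    simp only [Module.finrank_pi, Fintype.card_fin] at h4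
    omega
  calc 3 = Module.finrank ℝ (LinearMap.ker φ) := hker.symm
    _ ≤ _ := Submodule.finrank_mono hsub
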